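/- arXiv:2508.18030 — 2 statements merged into one kernel-verified Lean document; each statement's English description precedes it below -/
import Mathlib

section
/- Let m be a positive integer and let (a,b) ∈ F_{2^m} × F_{2^m} with (a,b) ≠ (0,0). Define the integer S_4 = Σ_{x ∈ F_{2^m}^*} Σ_{y ∈ F_{2^m}} (−1)^{Tr(yx² + xy) + Tr(axy + bx)}. Then: S_4 = 0 if a = 1; S_4 = 2^m if either a = 0, b ≠ 0 and Tr(b) = 0, or a ∉ {0,1} and Tr((a+1)b) = 0; and S_4 = −2^m if either a = 0, b ≠ 0 and Tr(b) = 1, or a ∉ {0,1} and Tr((a+1)b) = 1. -/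
attribute [local instance] Classical.propDecidable

noncomputable instance (m : ℕ) : Fintype (GaloisField 2 m) := Fintype.ofFinite _

/-- The absolute trace map from `F_{2^m}` to `F_2`. -/
noncomputable def Tr (m : ℕ) (x : GaloisField 2 m) : ZMod 2 :=
  Algebra.trace (ZMod 2) (GaloisField 2 m) x

/-- For `t ∈ F_2`, `sgn t` is the integer `(-1)^t`. -/
def sgn : ZMod 2 → ℤ := fun t => if t = 0 then 1 else -1

/-- The set `Υ₁ = {r + r⁻¹ : r ∈ F_{2^m}^*, r ≠ 1}`. -/
def Ups1 (m : ℕ) : Set (GaloisField 2 m) :=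
  {u | ∃ r : GaloisField 2 m, r ≠ 0 ∧ r ≠ 1 ∧ u = r + r⁻¹}

lemma sgn_add : ∀ s t : ZMod 2, sgn (s + t) = sgn s * sgn t := by decide

lemma Tr_add (m : ℕ) (u v : GaloisField 2 m) : Tr m (u + v) = Tr m u + Tr m v := by
  simp [Tr]

lemma sum_sgn (m : ℕ) (hm : 0 < m) (c : GaloisField 2 m) :
    ∑ y : GaloisField 2 m, sgn (Tr m (c * y)) =
      if c = 0 then (2 ^ m : ℤ) else 0 := by
  split_ifs with hc
  · subst hc
    simp only [zero_mul]
    have : Tr m (0 : GaloisField 2 m) = 0 := by simp [Tr]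
    rw [this]
    simp only [sgn, if_pos rfl, Finset.sum_const, Finset.card_univ, smul_eq_mul, mul_one]
    rw [show Fintype.card (GaloisField 2 m) = 2 ^ m from by
      rw [← Nat.card_eq_fintype_card]; exact GaloisField.card 2 m hm.ne']
    push_cast; ring
  · -- nontrivial character sums to zero
    obtain ⟨z, hz⟩ : ∃ z : GaloisField 2 m, Tr m z ≠ 0 := by
      have := Algebra.trace_ne_zero (ZMod 2) (GaloisField 2 m)
      rcases Function.ne_iff.mp (fun h => this (LinearMap.ext fun x => by
        simpa using congrFun h x)) with ⟨z, hz⟩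
      exact ⟨z, by simpa [Tr] using hz⟩
    have hz1 : Tr m z = 1 := by
      have h2 : ∀ t : ZMod 2, t ≠ 0 → t = 1 := by decide
      exact h2 _ hz
    set y0 : GaloisField 2 m := c⁻¹ * z with hy0
    have hcy0 : c * y0 = z := by rw [hy0, ← mul_assoc, mul_inv_cancel₀ hc, one_mul]
    have hS : ∑ y : GaloisField 2 m, sgn (Tr m (c * y)) =
        ∑ y : GaloisField 2 m, sgn (Tr m (c * (y + y0))) :=
      (Fintype.sum_equiv (Equiv.addRight y0) _ _ (fun y => by simp)).symm
    have hS2 : ∀ y : GaloisField 2 m, sgn (Tr m (c * (y + y0))) = - sgn (Tr m (c * y)) := by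
      intro y
      rw [mul_add, Tr_add, hcy0, hz1, sgn_add]
      simp [sgn]
    have hSS : ∑ y : GaloisField 2 m, sgn (Tr m (c * y)) =
        - ∑ y : GaloisField 2 m, sgn (Tr m (c * y)) := by
      conv_lhs => rw [hS]
      simp only [hS2]
      exact Finset.sum_neg_distrib _
    linarith

theorem stmt7 (m : ℕ) (hm : 0 < m) (a b : GaloisField 2 m) (hab : (a, b) ≠ (0, 0)) :
    let S4 : ℤ := ∑ x ∈ Finset.univ.filter (fun x : GaloisField 2 m => x ≠ 0),
      ∑ y : GaloisField 2 m, sgn (Tr m (y * x ^ 2 + x * y) + Tr m (a * x * y + b * x))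
    (a = 1 → S4 = 0) ∧
    ((a = 0 ∧ b ≠ 0 ∧ Tr m b = 0) ∨ (a ≠ 0 ∧ a ≠ 1 ∧ Tr m ((a + 1) * b) = 0) →
      S4 = 2 ^ m) ∧
    ((a = 0 ∧ b ≠ 0 ∧ Tr m b = 1) ∨ (a ≠ 0 ∧ a ≠ 1 ∧ Tr m ((a + 1) * b) = 1) →
      S4 = -(2 ^ m : ℤ)) := by
  intro S4
  have hchar : (2 : GaloisField 2 m) = 0 := by
    have : (2 : ℕ) = (2 : GaloisField 2 m) := by norm_num
    rw [← this]
    exact CharP.cast_eq_zero (GaloisField 2 m) 2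
  have key : ∀ x : GaloisField 2 m, x ≠ 0 →
      (∑ y : GaloisField 2 m, sgn (Tr m (y * x ^ 2 + x * y) + Tr m (a * x * y + b * x)))
      = (if x ^ 2 + x + a * x = 0 then (2 ^ m : ℤ) else 0) * sgn (Tr m (b * x)) := by
    intro x hx
    have harg : ∀ y : GaloisField 2 m,
        Tr m (y * x ^ 2 + x * y) + Tr m (a * x * y + b * x) =
        Tr m ((x ^ 2 + x + a * x) * y) + Tr m (b * x) := by
      intro y
      rw [← Tr_add, ← Tr_add]
      congr 1
      ring
    simp only [harg, sgn_add]
    rw [← Finset.sum_mul, sum_sgn m hm]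
  have hS4 : S4 = ∑ x ∈ Finset.univ.filter (fun x : GaloisField 2 m => x ≠ 0),
      (if x ^ 2 + x + a * x = 0 then (2 ^ m : ℤ) else 0) * sgn (Tr m (b * x)) := by
    refine Finset.sum_congr rfl fun x hx => ?_
    exact key x (by simpa using hx)
  refine ⟨?_, ?_, ?_⟩
  · -- a = 1
    intro ha
    subst ha
    rw [hS4]
    refine Finset.sum_eq_zero fun x hx => ?_
    have hx0 : x ≠ 0 := by simpa using hx
    have : x ^ 2 + x + 1 * x ≠ 0 := by
      intro h
      apply hx0
      have : x ^ 2 + (1 + 1) * x = 0 := by rw [← h]; ring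
      rw [show (1 + 1 : GaloisField 2 m) = 2 from by norm_num, hchar] at this
      simpa [pow_eq_zero_iff] using this
    rw [if_neg this, zero_mul]
  all_goals {
    intro h
    have ha1 : a ≠ 1 := by
      rcases h with ⟨ha, _, _⟩ | ⟨_, ha1, _⟩
      · rw [ha]; intro h'; exact one_ne_zero h'.symm
      · exact ha1
    have hx0 : a + 1 ≠ 0 := by
      intro h'
      apply ha1
      have : a + 1 + 1 = 0 + 1 := by rw [h']
      rwa [add_assoc, show (1 + 1 : GaloisField 2 m) = 2 from by norm_num, hchar,
        add_zero, zero_add] at this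
    have hroot : (a + 1) ^ 2 + (a + 1) + a * (a + 1) = 0 := by
      have : (a + 1) ^ 2 + (a + 1) + a * (a + 1) = 2 * (a ^ 2 + 2 * a + 1) := by ring
      rw [this, hchar, zero_mul]
    have honly : ∀ x : GaloisField 2 m, x ≠ 0 → x ≠ a + 1 →
        x ^ 2 + x + a * x ≠ 0 := by
      intro x hx hxa h'
      have hfac : x * (x + (a + 1)) = 0 := by
        have : x * (x + (a + 1)) = x ^ 2 + x + a * x := by ring
        rw [this, h']
      rcases mul_eq_zero.mp hfac with h0 | h0
      · exact hx h0
      · apply hxa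
        have : x + (a + 1) + (a + 1) = 0 + (a + 1) := by rw [h0]
        rwa [add_assoc, show (a+1) + (a+1) = 2 * (a+1) from by ring, hchar,
          zero_mul, add_zero, zero_add] at this
    have hval : S4 = (2 ^ m : ℤ) * sgn (Tr m (b * (a + 1))) := by
      rw [hS4]
      rw [Finset.sum_eq_single_of_mem (a + 1)
        (by simp [hx0])
        (fun x hx hne => by
          rw [if_neg (honly x (by simpa using hx) hne), zero_mul])]
      rw [if_pos hroot]
    have hTr : Tr m (b * (a + 1)) = Tr m ((a + 1) * b) := by rw [mul_comm]
    have htr' : Tr m (b * (a + 1)) = Tr m ((a + 1) * b) := hTr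
    rcases h with ⟨ha, _, htr⟩ | ⟨_, _, htr⟩
    · rw [hval, htr', ha]
      rw [show ((0 : GaloisField 2 m) + 1) * b = b from by ring, htr]
      simp [sgn]
    · rw [hval, htr', htr]
      simp [sgn]
  }
end

section
/- Let m ≥ 3 be odd and let (a,b) ∈ F_{2^m} × F_{2^m} with (a,b) ≠ (0,0). Then the weight wt(c(a,b)) = #{(x,y) ∈ D_2 : Tr(axy + bx) = 1} satisfies: wt(c(a,b)) = 2^{m−1}(2^{m−1} − 1) if a = 0, b ≠ 0 and Tr(b) = 1, or if a ∉ Υ1 ∪ {0}, or if a ∈ Υ1 and Tr((b+1)a) = 1; otherwise wt(c(a,b)) ∈ {2^m(2^{m−2} − 1), 2^{2m−2}}. -/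
attribute [local instance] Classical.propDecidable

lemma zmod2_cases (t : ZMod 2) : t = 0 ∨ t = 1 := by revert t; decide

lemma tr_add (m : ℕ) (x y : GaloisField 2 m) : Tr m (x + y) = Tr m x + Tr m y :=
  map_add (Algebra.trace (ZMod 2) (GaloisField 2 m)) x y

lemma tr_zero (m : ℕ) : Tr m 0 = 0 :=
  map_zero (Algebra.trace (ZMod 2) (GaloisField 2 m))

lemma tr_exists (m : ℕ) (a : GaloisField 2 m) (ha : a ≠ 0) : ∃ y, Tr m (a*y) = 1 := by
  have h := (traceForm_nondegenerate (ZMod 2) (GaloisField 2 m)).1 a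
  simp_rw [Algebra.traceForm_apply] at h
  by_contra! hf
  exact ha (h fun y => ((zmod2_cases (Tr m (a*y))).resolve_right (hf y)))

lemma card2m (m : ℕ) (hm : m ≠ 0) : Fintype.card (GaloisField 2 m) = 2 ^ m := by
  rw [← Nat.card_eq_fintype_card, GaloisField.card 2 m hm]

lemma cardA (m : ℕ) (hm : m ≠ 0) (α : GaloisField 2 m) (hα : α ≠ 0) (c : ZMod 2) :
    (Finset.univ.filter fun y => Tr m (α * y) = c).card = 2 ^ (m - 1) := by
  obtain ⟨y0, hy0⟩ := tr_exists m α hα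
  have key : ∀ c : ZMod 2, (Finset.univ.filter fun y => Tr m (α * y) = c).card
      = (Finset.univ.filter fun y => Tr m (α * y) = c + 1).card := by
    intro c
    apply Finset.card_nbij' (fun y => y + y0) (fun y => y + y0)
    · intro y hy
      simp only [Finset.mem_coe, Finset.mem_filter, Finset.mem_univ, true_and] at hy ⊢
      rw [mul_add, tr_add, hy, hy0]
    · intro y hy
      simp only [Finset.mem_coe, Finset.mem_filter, Finset.mem_univ, true_and] at hy ⊢
      rw [mul_add, tr_add, hy, hy0]
      generalize c = t; revert t; decide
    · intro y _; dsimp only; rw [add_assoc, CharTwo.add_self_eq_zero, add_zero]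
    · intro y _; dsimp only; rw [add_assoc, CharTwo.add_self_eq_zero, add_zero]
  have hsum : (Finset.univ.filter fun y : GaloisField 2 m => Tr m (α * y) = 0).card
      + (Finset.univ.filter fun y : GaloisField 2 m => Tr m (α * y) = 1).card = 2 ^ m := by
    have hpart := Finset.card_filter_add_card_filter_not
      (s := (Finset.univ : Finset (GaloisField 2 m)))
      (p := fun y : GaloisField 2 m => Tr m (α * y) = 0)
    have heq : (Finset.univ.filter fun y : GaloisField 2 m => ¬ Tr m (α * y) = 0)
        = Finset.univ.filter fun y : GaloisField 2 m => Tr m (α * y) = 1 := by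
      apply Finset.filter_congr
      intro y _
      constructor
      · intro h; exact (zmod2_cases _).resolve_left h
      · intro h; rw [h]; decide
    rw [heq, Finset.card_univ, card2m m hm] at hpart
    exact hpart
  have h0 : (Finset.univ.filter fun y : GaloisField 2 m => Tr m (α * y) = 0).card = 2^(m-1) := by
    have hk := key 0
    norm_num at hk
    have hp : 2 ^ m = 2 * 2 ^ (m - 1) := by
      conv_lhs => rw [show m = (m-1)+1 by omega]
      ring
    omega
  rcases zmod2_cases c with rfl | rfl
  · exact h0
  · have hk := key 0; norm_num at hk; omega

lemma cardC (m : ℕ) (hm : m ≠ 0) (α : GaloisField 2 m) (hα : α ≠ 0) (c1 c2 : ZMod 2) :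
    (Finset.univ.filter fun y => Tr m (α * y) = c1 ∧ Tr m (α * y) = c2).card
      = if c1 = c2 then 2 ^ (m - 1) else 0 := by
  split_ifs with h
  · subst h
    rw [← cardA m hm α hα c1]
    congr 1
    apply Finset.filter_congr
    intro y _
    simp [and_self]
  · rw [Finset.card_eq_zero, Finset.filter_eq_empty_iff]
    rintro y - ⟨h1, h2⟩
    exact h (h1 ▸ h2)

lemma cardB (m : ℕ) (hm : 2 ≤ m) (α β : GaloisField 2 m) (hα : α ≠ 0) (hβ : β ≠ 0)
    (hne : α ≠ β) (c1 c2 : ZMod 2) :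
    (Finset.univ.filter fun y => Tr m (α * y) = c1 ∧ Tr m (β * y) = c2).card = 2 ^ (m - 2) := by
  have hm0 : m ≠ 0 := by omega
  set N : ZMod 2 → ZMod 2 → ℕ := fun c1 c2 =>
    (Finset.univ.filter fun y => Tr m (α * y) = c1 ∧ Tr m (β * y) = c2).card with hN
  -- row sums
  have hrow : ∀ c1 : ZMod 2, N c1 0 + N c1 1 = 2 ^ (m-1) := by
    intro d
    have hpart := Finset.card_filter_add_card_filter_not
      (s := (Finset.univ.filter fun y : GaloisField 2 m => Tr m (α * y) = d))
      (p := fun y : GaloisField 2 m => Tr m (β * y) = 0)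
    rw [Finset.filter_filter, Finset.filter_filter, cardA m hm0 α hα d] at hpart
    have e1 : (Finset.univ.filter fun y : GaloisField 2 m =>
        Tr m (α * y) = d ∧ Tr m (β * y) = 0) = Finset.univ.filter
          (fun y : GaloisField 2 m => Tr m (α*y) = d ∧ Tr m (β*y) = 0) := rfl
    have e2 : (Finset.univ.filter fun y : GaloisField 2 m =>
        Tr m (α * y) = d ∧ ¬ Tr m (β * y) = 0) = Finset.univ.filter
          (fun y : GaloisField 2 m => Tr m (α*y) = d ∧ Tr m (β*y) = 1) := by
      apply Finset.filter_congr; intro y _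
      constructor
      · rintro ⟨u, v⟩; exact ⟨u, (zmod2_cases _).resolve_left v⟩
      · rintro ⟨u, v⟩; rw [v]; exact ⟨u, by decide⟩
    rw [e2] at hpart
    exact hpart
  have hcol : N 0 0 + N 1 0 = 2 ^ (m-1) := by
    have hpart := Finset.card_filter_add_card_filter_not
      (s := (Finset.univ.filter fun y : GaloisField 2 m => Tr m (β * y) = 0))
      (p := fun y : GaloisField 2 m => Tr m (α * y) = 0)
    rw [Finset.filter_filter, Finset.filter_filter, cardA m hm0 β hβ 0] at hpart
    have e1 : (Finset.univ.filter fun y : GaloisField 2 m =>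
        Tr m (β * y) = 0 ∧ Tr m (α * y) = 0) = Finset.univ.filter
          (fun y : GaloisField 2 m => Tr m (α*y) = 0 ∧ Tr m (β*y) = 0) := by
      apply Finset.filter_congr; intro y _; exact and_comm
    have e2 : (Finset.univ.filter fun y : GaloisField 2 m =>
        Tr m (β * y) = 0 ∧ ¬ Tr m (α * y) = 0) = Finset.univ.filter
          (fun y : GaloisField 2 m => Tr m (α*y) = 1 ∧ Tr m (β*y) = 0) := by
      apply Finset.filter_congr; intro y _
      constructor
      · rintro ⟨u, v⟩; exact ⟨(zmod2_cases _).resolve_left v, u⟩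
      · rintro ⟨u, v⟩; rw [u]; exact ⟨v, by decide⟩
    rw [e1, e2] at hpart
    exact hpart
  have hdiag : N 0 0 + N 1 1 = 2 ^ (m-1) := by
    have hαβ : α + β ≠ 0 := by
      intro h
      have h2 := CharTwo.add_eq_iff_eq_add.mp h
      rw [zero_add] at h2
      exact hne h2
    have hA := cardA m hm0 (α + β) hαβ 0
    have e3 : (Finset.univ.filter fun y : GaloisField 2 m => Tr m ((α+β) * y) = 0)
        = (Finset.univ.filter fun y : GaloisField 2 m =>
            Tr m (α*y) = 0 ∧ Tr m (β*y) = 0)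
          ∪ (Finset.univ.filter fun y : GaloisField 2 m =>
            Tr m (α*y) = 1 ∧ Tr m (β*y) = 1) := by
      ext y
      simp only [Finset.mem_union, Finset.mem_filter, Finset.mem_univ, true_and]
      rw [add_mul, tr_add]
      generalize Tr m (α*y) = s
      generalize Tr m (β*y) = t
      revert s t; decide
    have hdisj : Disjoint (Finset.univ.filter fun y : GaloisField 2 m =>
            Tr m (α*y) = 0 ∧ Tr m (β*y) = 0)
          (Finset.univ.filter fun y : GaloisField 2 m =>
            Tr m (α*y) = 1 ∧ Tr m (β*y) = 1) := by
      rw [Finset.disjoint_left]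
      rintro y hy hy'
      simp only [Finset.mem_filter] at hy hy'
      have := hy.2.1; have := hy'.2.1
      simp_all
    rw [e3, Finset.card_union_of_disjoint hdisj] at hA
    exact hA
  have h1 : 2^(m-1) = 2 * 2^(m-2) := by
    conv_lhs => rw [show m - 1 = (m-2)+1 by omega]
    ring
  have h00 := hrow 0
  have h10 := hrow 1
  show N c1 c2 = 2 ^ (m - 2)
  rcases zmod2_cases c1 with rfl | rfl <;> rcases zmod2_cases c2 with rfl | rfl <;> omega

lemma card_prod (m : ℕ) (P : GaloisField 2 m → Prop)
    (Q : GaloisField 2 m → GaloisField 2 m → Prop) :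
    (Finset.univ.filter fun p : GaloisField 2 m × GaloisField 2 m => P p.1 ∧ Q p.1 p.2).card
      = ∑ x ∈ Finset.univ.filter P, (Finset.univ.filter fun y => Q x y).card := by
  rw [Finset.card_eq_sum_card_fiberwise
    (f := Prod.fst) (t := Finset.univ.filter P)
    (fun p hp => by simp only [Finset.mem_coe, Finset.mem_filter, Finset.mem_univ, true_and] at hp ⊢; exact hp.1)]
  apply Finset.sum_congr rfl
  intro x hx
  apply Finset.card_nbij' (fun p => p.2) (fun y => (x, y))
  · rintro ⟨u, v⟩ hp
    simp only [Finset.mem_coe, Finset.mem_filter, Finset.mem_univ, true_and] at hp ⊢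
    obtain ⟨⟨-, hq⟩, rfl⟩ := hp
    exact hq
  · intro y hy
    simp only [Finset.mem_coe, Finset.mem_filter, Finset.mem_univ, true_and] at hx hy ⊢
    exact ⟨⟨hx, hy⟩, trivial⟩
  · rintro ⟨u, v⟩ hp
    simp only [Finset.mem_coe, Finset.mem_filter] at hp
    obtain ⟨-, rfl⟩ := hp
    rfl
  · intro y _; rfl


lemma hsq {m : ℕ} (x : GaloisField 2 m) : x ^ 2 + 1 = (x + 1) ^ 2 := by
  have h : (x + 1) ^ 2 = x ^ 2 + (x + x) + 1 := by ring
  rw [h, CharTwo.add_self_eq_zero, add_zero]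

lemma sq_ne_zero {m : ℕ} {x : GaloisField 2 m} (hx : x ≠ 1) : x ^ 2 + 1 ≠ 0 := by
  rw [hsq]
  intro h
  rw [pow_eq_zero_iff (by norm_num)] at h
  have := CharTwo.add_eq_iff_eq_add.mp h
  rw [zero_add] at this
  exact hx this

lemma tr_one (m : ℕ) (hm : m ≠ 0) (hodd : Odd m) : Tr m 1 = 1 := by
  unfold Tr
  have h1 : (1 : GaloisField 2 m) = algebraMap (ZMod 2) _ 1 := by simp
  rw [h1, Algebra.trace_algebraMap, GaloisField.finrank 2 hm]
  obtain ⟨k, hk⟩ := hodd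
  subst hk
  have h2 : (2 : ZMod 2) = 0 := by decide
  push_cast [nsmul_eq_mul]
  rw [h2]; ring

lemma ups_ne_zero {m : ℕ} {a : GaloisField 2 m} (h : a ∈ Ups1 m) : a ≠ 0 := by
  obtain ⟨r, hr0, hr1, rfl⟩ := h
  intro h0
  have hinv : r * r⁻¹ = 1 := mul_inv_cancel₀ hr0
  have hr2 : r ^ 2 + 1 = 0 := by
    have := congrArg (· * r) h0
    simp only [add_mul, zero_mul] at this
    rw [inv_mul_cancel₀ hr0] at this
    rw [← this]; ring
  exact sq_ne_zero hr1 hr2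


theorem stmt12 (m : ℕ) (hm : 3 ≤ m) (hodd : Odd m) (a b : GaloisField 2 m)
    (hab : (a, b) ≠ (0, 0)) :
    let wt : ℕ := (Finset.univ.filter (fun p : GaloisField 2 m × GaloisField 2 m =>
      p.1 ≠ 0 ∧ Tr m (p.2 * p.1 ^ 2 + p.1 + p.2) = 0 ∧
        Tr m (a * p.1 * p.2 + b * p.1) = 1)).card
    ((a = 0 ∧ b ≠ 0 ∧ Tr m b = 1) ∨ (a ∉ Ups1 m ∧ a ≠ 0) ∨
        (a ∈ Ups1 m ∧ Tr m ((b + 1) * a) = 1) →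
      wt = 2 ^ (m - 1) * (2 ^ (m - 1) - 1)) ∧
    (¬((a = 0 ∧ b ≠ 0 ∧ Tr m b = 1) ∨ (a ∉ Ups1 m ∧ a ≠ 0) ∨
        (a ∈ Ups1 m ∧ Tr m ((b + 1) * a) = 1)) →
      wt = 2 ^ m * (2 ^ (m - 2) - 1) ∨ wt = 2 ^ (2 * m - 2)) := by
  have hm0 : m ≠ 0 := by omega
  intro wt
  set N : GaloisField 2 m → ℕ := fun x =>
    (Finset.univ.filter fun y => Tr m ((x ^ 2 + 1) * y) = Tr m x ∧
      Tr m ((a * x) * y) = 1 + Tr m (b * x)).card with hNdef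
  have hwt : wt = ∑ x ∈ Finset.univ.filter (fun x : GaloisField 2 m => x ≠ 0), N x := by
    have h1 : wt = (Finset.univ.filter (fun p : GaloisField 2 m × GaloisField 2 m =>
        p.1 ≠ 0 ∧ (Tr m ((p.1 ^ 2 + 1) * p.2) = Tr m p.1 ∧
          Tr m ((a * p.1) * p.2) = 1 + Tr m (b * p.1)))).card := by
      apply congrArg Finset.card
      apply Finset.filter_congr
      intro p _hp
      apply and_congr_right
      intro _
      have e1 : p.2 * p.1 ^ 2 + p.1 + p.2 = (p.1 ^ 2 + 1) * p.2 + p.1 := by ring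
      have e2 : a * p.1 * p.2 + b * p.1 = (a * p.1) * p.2 + b * p.1 := by ring
      rw [e1, e2, tr_add, tr_add]
      generalize Tr m ((p.1 ^ 2 + 1) * p.2) = s
      generalize Tr m p.1 = t
      generalize Tr m ((a * p.1) * p.2) = u
      generalize Tr m (b * p.1) = v
      revert s t u v; decide
    rw [h1]
    convert card_prod m (fun x => x ≠ 0) (fun x y => Tr m ((x ^ 2 + 1) * y) = Tr m x ∧
      Tr m ((a * x) * y) = 1 + Tr m (b * x)) using 2 <;>
      first
        | (ext z; simp only [Finset.mem_filter])
        | (apply congrArg Finset.card; ext z; simp only [Finset.mem_filter])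
  have htr1 : Tr m 1 = 1 := tr_one m hm0 hodd
  have hN1 : N 1 = 0 := by
    rw [hNdef]
    simp only
    rw [Finset.card_eq_zero, Finset.filter_eq_empty_iff]
    rintro y - ⟨h1, -⟩
    rw [one_pow, CharTwo.add_self_eq_zero, zero_mul, tr_zero, htr1] at h1
    exact absurd h1 (by decide)
  -- generic count
  have hgen : ∀ x : GaloisField 2 m, x ≠ 0 → x ≠ 1 → a ≠ 0 → a * x ≠ x ^ 2 + 1 →
      N x = 2 ^ (m - 2) := by
    intro x hx0 hx1 ha hne
    rw [hNdef]
    simp only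
    rw [cardB m (by omega) _ _ (sq_ne_zero hx1) (mul_ne_zero ha hx0) (fun h => hne h.symm)]
  -- root count
  have hroot : ∀ x : GaloisField 2 m, x ≠ 0 → a ≠ 0 → a * x = x ^ 2 + 1 →
      N x = if Tr m ((b + 1) * x) = 1 then 2 ^ (m - 1) else 0 := by
    intro x hx0 ha heq
    rw [hNdef]
    simp only
    rw [← heq, cardC m hm0 _ (mul_ne_zero ha hx0)]
    congr 1
    have e3 : (b + 1) * x = b * x + x := by ring
    rw [e3, tr_add]
    generalize Tr m (b*x) = s
    generalize Tr m x = t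
    revert s t; decide
  -- a = 0 count
  have hA0 : a = 0 → b ≠ 0 →
      wt = 2 ^ (m-1) * (2 ^ (m-1) - (if Tr m b = 1 then 1 else 0)) := by
    intro ha hb
    have key : ∀ x : GaloisField 2 m, x ≠ 0 →
        N x = if Tr m (b * x) = 1 ∧ x ≠ 1 then 2 ^ (m-1) else 0 := by
      intro x hx0
      by_cases hx1 : x = 1
      · subst hx1
        rw [hN1, if_neg (by tauto)]
      · rw [hNdef]; simp only
        rw [ha, zero_mul]
        by_cases htb : Tr m (b * x) = 1
        · rw [if_pos ⟨htb, hx1⟩]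
          rw [← cardA m hm0 (x^2+1) (sq_ne_zero hx1) (Tr m x)]
          congr 1
          apply Finset.filter_congr
          intro y _hy
          rw [zero_mul, tr_zero, htb]
          simp only [and_iff_left_iff_imp]
          intro _; decide
        · rw [if_neg (by tauto)]
          rw [Finset.card_eq_zero, Finset.filter_eq_empty_iff]
          rintro y - ⟨-, h2⟩
          rw [zero_mul, tr_zero] at h2
          apply htb
          rcases zmod2_cases (Tr m (b*x)) with h | h
          · rw [h] at h2; exact absurd h2 (by decide)
          · exact h
    rw [hwt, Finset.sum_congr rfl (fun x hx => key x (by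
      simp only [Finset.mem_filter] at hx; exact hx.2))]
    rw [Finset.sum_ite, Finset.sum_const_zero, add_zero, Finset.sum_const, smul_eq_mul,
      Finset.filter_filter]
    rw [mul_comm]
    congr 1
    have e4 : (Finset.univ.filter fun x : GaloisField 2 m =>
        x ≠ 0 ∧ Tr m (b * x) = 1 ∧ x ≠ 1)
        = (Finset.univ.filter fun x : GaloisField 2 m => Tr m (b * x) = 1).filter
            (fun x => ¬ x = 1) := by
      rw [Finset.filter_filter]
      apply Finset.filter_congr
      intro x _hx
      constructor
      · rintro ⟨-, h1, h2⟩; exact ⟨h1, h2⟩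
      · rintro ⟨h1, h2⟩
        refine ⟨?_, h1, h2⟩
        rintro rfl
        rw [mul_zero, tr_zero] at h1
        exact absurd h1 (by decide)
    rw [e4]
    have hpart := Finset.card_filter_add_card_filter_not
      (s := Finset.univ.filter fun x : GaloisField 2 m => Tr m (b * x) = 1)
      (p := fun x : GaloisField 2 m => x = 1)
    rw [cardA m hm0 b hb 1] at hpart
    have e5 : ((Finset.univ.filter fun x : GaloisField 2 m => Tr m (b * x) = 1).filter
        (fun x => x = 1)).card = if Tr m b = 1 then 1 else 0 := by
      split_ifs with htb
      · rw [Finset.card_eq_one]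
        refine ⟨1, ?_⟩
        ext x
        simp only [Finset.mem_filter, Finset.mem_univ, true_and, Finset.mem_singleton]
        constructor
        · rintro ⟨-, h⟩; exact h
        · rintro rfl; rw [mul_one]; exact ⟨htb, rfl⟩
      · rw [Finset.card_eq_zero, Finset.filter_eq_empty_iff]
        rintro x hx rfl
        simp only [Finset.mem_filter, Finset.mem_univ, true_and, mul_one] at hx
        exact htb hx
    omega
  
  have hScard : (Finset.univ.filter (fun x : GaloisField 2 m => x ≠ 0)).card = 2 ^ m - 1 := by
    have : (Finset.univ.filter (fun x : GaloisField 2 m => x ≠ 0))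
        = Finset.univ.erase 0 := by
      ext x
      simp [Finset.mem_erase, Finset.mem_filter, and_comm]
    rw [this, Finset.card_erase_of_mem (Finset.mem_univ 0), Finset.card_univ, card2m m hm0]
  -- case a not in Ups1, a ≠ 0
  have H3 : a ≠ 0 → a ∉ Ups1 m → wt = (2 ^ m - 2) * 2 ^ (m - 2) := by
    intro ha hups
    have key : ∀ x ∈ (Finset.univ.filter (fun x : GaloisField 2 m => x ≠ 0)) \ {1},
        N x = 2 ^ (m - 2) := by
      intro x hx
      simp only [Finset.mem_sdiff, Finset.mem_filter, Finset.mem_univ, true_and,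
        Finset.mem_singleton] at hx
      obtain ⟨hx0, hx1⟩ := hx
      refine hgen x hx0 hx1 ha ?_
      intro heq
      apply hups
      have hxinv : x * x⁻¹ = 1 := mul_inv_cancel₀ hx0
      refine ⟨x, hx0, hx1, ?_⟩
      calc a = a * (x * x⁻¹) := by rw [hxinv, mul_one]
        _ = (a * x) * x⁻¹ := by ring
        _ = (x ^ 2 + 1) * x⁻¹ := by rw [heq]
        _ = x * (x * x⁻¹) + x⁻¹ := by ring
        _ = x + x⁻¹ := by rw [hxinv, mul_one]
    have hsub : {1} ⊆ (Finset.univ.filter (fun x : GaloisField 2 m => x ≠ 0)) := by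
      intro x hx
      simp only [Finset.mem_singleton] at hx
      subst hx
      simp only [Finset.mem_filter, Finset.mem_univ, true_and]
      exact one_ne_zero
    rw [hwt, ← Finset.sum_sdiff hsub, Finset.sum_singleton, hN1, add_zero,
      Finset.sum_congr rfl key, Finset.sum_const, smul_eq_mul,
      Finset.card_sdiff_of_subset hsub, hScard, Finset.card_singleton]
    have he : 2 ^ m - 1 - 1 = 2 ^ m - 2 := by omega
    rw [he]
  -- case a in Ups1
  have HB : ∀ x0 : GaloisField 2 m, x0 ≠ 0 → x0 ≠ 1 → a = x0 + x0⁻¹ →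
      wt = (2 ^ m - 4) * 2 ^ (m - 2)
        + ((if Tr m ((b + 1) * x0) = 1 then 2 ^ (m - 1) else 0)
          + (if Tr m ((b + 1) * x0⁻¹) = 1 then 2 ^ (m - 1) else 0)) := by
    intro x0 hx00 hx01 ha
    have hx0inv : x0 * x0⁻¹ = 1 := mul_inv_cancel₀ hx00
    have hane : a ≠ 0 := ups_ne_zero ⟨x0, hx00, hx01, ha⟩
    have hinv0 : x0⁻¹ ≠ 0 := inv_ne_zero hx00
    have hinv1 : x0⁻¹ ≠ 1 := by
      intro h
      exact hx01 (by rw [← inv_inv x0, h, inv_one])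
    have hneq : x0 ≠ x0⁻¹ := by
      intro h
      have h2 : x0 ^ 2 + 1 = 0 := by
        rw [pow_two]
        nth_rewrite 2 [h]
        rw [hx0inv, CharTwo.add_self_eq_zero]
      exact sq_ne_zero hx01 h2
    have hroot0 : a * x0 = x0 ^ 2 + 1 := by
      rw [ha]; linear_combination hx0inv
    have hroot1 : a * x0⁻¹ = (x0⁻¹) ^ 2 + 1 := by
      rw [ha]
      have hinv : x0⁻¹ * (x0⁻¹)⁻¹ = 1 := mul_inv_cancel₀ hinv0
      rw [inv_inv] at hinv
      linear_combination hinv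
    have h2z : (2 : GaloisField 2 m) = 0 := by
      have := CharTwo.add_self_eq_zero (1 : GaloisField 2 m)
      linear_combination this
    set E : Finset (GaloisField 2 m) := {1, x0, x0⁻¹} with hE
    have hsub : E ⊆ Finset.univ.filter (fun x : GaloisField 2 m => x ≠ 0) := by
      intro x hx
      simp only [hE, Finset.mem_insert, Finset.mem_singleton] at hx
      simp only [Finset.mem_filter, Finset.mem_univ, true_and]
      rcases hx with rfl | rfl | rfl
      · exact one_ne_zero
      · exact hx00
      · exact hinv0
    have hEcard : E.card = 3 := by
      rw [hE]
      rw [Finset.card_insert_of_notMem (by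
        simp only [Finset.mem_insert, Finset.mem_singleton]
        push_neg
        exact ⟨fun h => hx01 h.symm, fun h => hinv1 h.symm⟩)]
      rw [Finset.card_insert_of_notMem (by
        simp only [Finset.mem_singleton]
        exact hneq)]
      rfl
    have key : ∀ x ∈ (Finset.univ.filter (fun x : GaloisField 2 m => x ≠ 0)) \ E,
        N x = 2 ^ (m - 2) := by
      intro x hx
      simp only [Finset.mem_sdiff, Finset.mem_filter, Finset.mem_univ, true_and, hE,
        Finset.mem_insert, Finset.mem_singleton] at hx
      obtain ⟨hx0, hxE⟩ := hx
      push_neg at hxE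
      obtain ⟨hx1, hxa, hxb⟩ := hxE
      refine hgen x hx0 hx1 hane ?_
      intro heq
      have hfact : (x + x0) * (x + x0⁻¹) = 0 := by
        linear_combination heq - x * ha + hx0inv + (x ^ 2 + 1) * h2z
      rcases mul_eq_zero.mp hfact with h | h
      · apply hxa
        have := CharTwo.add_eq_iff_eq_add.mp h
        rwa [zero_add] at this
      · apply hxb
        have := CharTwo.add_eq_iff_eq_add.mp h
        rwa [zero_add] at this
    have hsumE : ∑ x ∈ E, N x
        = (if Tr m ((b + 1) * x0) = 1 then 2 ^ (m - 1) else 0)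
          + (if Tr m ((b + 1) * x0⁻¹) = 1 then 2 ^ (m - 1) else 0) := by
      rw [hE]
      rw [Finset.sum_insert (by
        simp only [Finset.mem_insert, Finset.mem_singleton]
        push_neg
        exact ⟨fun h => hx01 h.symm, fun h => hinv1 h.symm⟩)]
      rw [Finset.sum_insert (by simp only [Finset.mem_singleton]; exact hneq)]
      rw [Finset.sum_singleton, hN1, zero_add]
      rw [hroot x0 hx00 hane hroot0, hroot x0⁻¹ hinv0 hane hroot1]
    rw [hwt, ← Finset.sum_sdiff hsub, hsumE, Finset.sum_congr rfl key,
      Finset.sum_const, smul_eq_mul, Finset.card_sdiff_of_subset hsub, hScard, hEcard]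
    have he : 2 ^ m - 1 - 3 = 2 ^ m - 4 := by omega
    rw [he, add_comm]
  -- trace sum over the two roots
  have htrsum : ∀ x0 : GaloisField 2 m, x0 ≠ 0 → a = x0 + x0⁻¹ →
      Tr m ((b + 1) * x0) + Tr m ((b + 1) * x0⁻¹) = Tr m ((b + 1) * a) := by
    intro x0 hx00 ha
    rw [← tr_add]
    congr 1
    rw [ha]; ring
  -- arithmetic abbreviations
  have hApos : 1 ≤ 2 ^ (m - 2) := Nat.one_le_two_pow
  have hA1 : 2 ^ (m - 1) = 2 * 2 ^ (m - 2) := by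
    conv_lhs => rw [show m - 1 = (m - 2) + 1 by omega]
    ring
  have hA2 : (2 : ℕ) ^ m = 4 * 2 ^ (m - 2) := by
    conv_lhs => rw [show m = (m - 2) + 2 by omega]
    ring
  have hA3 : (2 : ℕ) ^ (2 * m - 2) = 4 * (2 ^ (m - 2) * 2 ^ (m - 2)) := by
    rw [show 2 * m - 2 = (m - 2) + m by omega, pow_add, hA2]
    ring
  set A := 2 ^ (m - 2) with hAdef
  constructor
  · rintro (⟨ha, hb, htb⟩ | ⟨hups, ha⟩ | ⟨hups, htr⟩)
    · rw [hA0 ha hb, if_pos htb]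
    · rw [H3 ha hups, hA1, hA2]
      zify [show (1:ℕ) ≤ 2 * A by omega, show (2:ℕ) ≤ 4 * A by omega]
      ring
    · obtain ⟨x0, hx00, hx01, ha⟩ := hups
      have hsum := htrsum x0 hx00 ha
      rw [htr] at hsum
      rw [HB x0 hx00 hx01 ha]
      have hone : (if Tr m ((b + 1) * x0) = 1 then 2 ^ (m - 1) else 0)
          + (if Tr m ((b + 1) * x0⁻¹) = 1 then 2 ^ (m - 1) else 0) = 2 ^ (m - 1) := by
        rcases zmod2_cases (Tr m ((b + 1) * x0)) with h | h <;>
          rcases zmod2_cases (Tr m ((b + 1) * x0⁻¹)) with h' | h'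
        · rw [h, h'] at hsum; exact absurd hsum (by decide)
        · rw [h, h', if_neg (by decide), if_pos rfl, zero_add]
        · rw [h, h', if_pos rfl, if_neg (by decide), add_zero]
        · rw [h, h'] at hsum; exact absurd hsum (by decide)
      rw [hone, hA1, hA2]
      zify [show (1:ℕ) ≤ 2 * A by omega, show (4:ℕ) ≤ 4 * A by omega]
      ring
  · intro hneg
    push_neg at hneg
    obtain ⟨h1, h2, h3⟩ := hneg
    by_cases ha : a = 0
    · have hb : b ≠ 0 := by
        intro hb
        exact hab (by rw [ha, hb])
      have htb : Tr m b = 0 := by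
        rcases zmod2_cases (Tr m b) with h | h
        · exact h
        · exact absurd h (h1 ha hb)
      right
      rw [hA0 ha hb, if_neg (by rw [htb]; decide), Nat.sub_zero, hA1, hA3]
      ring
    · have hups : a ∈ Ups1 m := by
        by_contra hcon
        exact ha (h2 hcon)
      have htr : Tr m ((b + 1) * a) = 0 := by
        rcases zmod2_cases (Tr m ((b + 1) * a)) with h | h
        · exact h
        · exact absurd h (h3 hups)
      obtain ⟨x0, hx00, hx01, haeq⟩ := hups
      have hsum := htrsum x0 hx00 haeq
      rw [htr] at hsum
      rw [HB x0 hx00 hx01 haeq]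
      rcases zmod2_cases (Tr m ((b + 1) * x0)) with h | h <;>
        rcases zmod2_cases (Tr m ((b + 1) * x0⁻¹)) with h' | h'
      · left
        rw [h, h']
        split_ifs with u
        · exact absurd u (by decide)
        · rw [hA2]
          zify [show (4:ℕ) ≤ 4 * A by omega, show (1:ℕ) ≤ A by omega]
          ring
      · rw [h, h'] at hsum; exact absurd hsum (by decide)
      · rw [h, h'] at hsum; exact absurd hsum (by decide)
      · right
        rw [h, h']
        split_ifs with u
        · rw [hA1, hA3, hA2]
          zify [show (4:ℕ) ≤ 4 * A by omega]
          ring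
        · exact absurd rfl u
end
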